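/- Every λ ∈ X(T)^+ has only finitely many predecessors in X(T)^+, i.e. the set of μ ∈ X(T)^+ such that μ < λ and there is no ν ∈ X(T)^+ with μ < ν < λ is finite. -/

import Mathlib

set_option linter.unreachableTactic false
set_option linter.unnecessarySeqFocus false
set_option linter.unusedTactic false

/-- Partial sum of the first `k` coordinates of `μ ∈ ℤ^{m+n}`. -/
def psum (m n : ℕ) (μ : Fin (m + n) → ℤ) (k : ℕ) : ℤ :=
  ∑ i : Fin (m + n), if (i : ℕ) < k then μ i else 0

/-- Dominance order on `ℤ^{m+n}`: `μ ≤ λ` iff all proper initial partial sums of `μ` are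
at most those of `λ`, and the total sums agree. -/
def domLE (m n : ℕ) (μ lam : Fin (m + n) → ℤ) : Prop :=
  (∀ k : ℕ, 1 ≤ k → k < m + n → psum m n μ k ≤ psum m n lam k) ∧
    psum m n μ (m + n) = psum m n lam (m + n)

/-- Strict dominance order. -/
def domLT (m n : ℕ) (μ lam : Fin (m + n) → ℤ) : Prop :=
  domLE m n μ lam ∧ μ ≠ lam

/-- Membership in `X(T)^+`: the first `m` coordinates are weakly decreasing, and the last `n`
coordinates are weakly decreasing. -/
def IsDominant (m n : ℕ) (lam : Fin (m + n) → ℤ) : Prop :=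
  (∀ i j : Fin (m + n), (i : ℕ) ≤ (j : ℕ) → (j : ℕ) < m → lam j ≤ lam i) ∧
    (∀ i j : Fin (m + n), m ≤ (i : ℕ) → (i : ℕ) ≤ (j : ℕ) → lam j ≤ lam i)

lemma psum_zero (m n : ℕ) (μ : Fin (m+n) → ℤ) : psum m n μ 0 = 0 := by
  simp [psum]

lemma psum_succ (m n : ℕ) (μ : Fin (m+n) → ℤ) (k : ℕ) (hk : k < m + n) :
    psum m n μ (k+1) = psum m n μ k + μ ⟨k, hk⟩ := by
  unfold psum
  have h : ∀ i : Fin (m+n), (if (i:ℕ) < k+1 then μ i else 0)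
      = (if (i:ℕ) < k then μ i else 0) + (if i = ⟨k,hk⟩ then μ i else 0) := by
    intro i
    by_cases h1 : (i:ℕ) < k
    · have h2 : i ≠ ⟨k,hk⟩ := by
        intro h; rw [Fin.ext_iff] at h; simp at h; omega
      simp [h1, h2, Nat.lt_succ_of_lt h1]
    · by_cases h2 : i = ⟨k,hk⟩
      · have : (i:ℕ) = k := by rw [h2]
        simp [h1, h2, this]
      · have h4 : (i:ℕ) ≠ k := by
          intro h; exact h2 (Fin.ext h)
        have h3 : ¬ (i:ℕ) < k+1 := by omega
        simp [h1, h2, h3]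
  rw [Finset.sum_congr rfl (fun i _ => h i), Finset.sum_add_distrib,
      Fintype.sum_ite_eq']

lemma psum_of_ge (m n : ℕ) (μ : Fin (m+n) → ℤ) (k : ℕ) (hk : m + n ≤ k) :
    psum m n μ k = psum m n μ (m+n) := by
  unfold psum
  apply Finset.sum_congr rfl
  intro i _
  have h1 : (i:ℕ) < k := lt_of_lt_of_le i.isLt hk
  simp [h1, i.isLt]

lemma psum_shift (m n : ℕ) (μ : Fin (m+n) → ℤ) (A B : Fin (m+n)) (k : ℕ) :
    psum m n (fun i => μ i + (if i = A then 1 else 0) - (if i = B then 1 else 0)) k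
      = psum m n μ k + (if (A:ℕ) < k then 1 else 0) - (if (B:ℕ) < k then 1 else 0) := by
  unfold psum
  have h1 : ∀ (C : Fin (m+n)), ∑ i : Fin (m+n), (if (i:ℕ) < k then (if i = C then (1:ℤ) else 0) else 0)
      = (if (C:ℕ) < k then (1:ℤ) else 0) := by
    intro C
    have h : ∀ i : Fin (m+n), (if (i:ℕ) < k then (if i = C then (1:ℤ) else 0) else 0)
        = (if i = C then (if (C:ℕ) < k then (1:ℤ) else 0) else 0) := by
      intro i
      by_cases h : i = C
      · subst h; simp
      · simp [h]
    rw [Finset.sum_congr rfl (fun i _ => h i), Fintype.sum_ite_eq']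
  have h2 : ∀ i : Fin (m+n), (if (i:ℕ) < k then (μ i + (if i = A then (1:ℤ) else 0) - (if i = B then 1 else 0)) else 0)
      = (if (i:ℕ) < k then μ i else 0) + (if (i:ℕ) < k then (if i = A then (1:ℤ) else 0) else 0)
        - (if (i:ℕ) < k then (if i = B then (1:ℤ) else 0) else 0) := by
    intro i; split_ifs <;> ring
  rw [Finset.sum_congr rfl (fun i _ => h2 i), Finset.sum_sub_distrib, Finset.sum_add_distrib, h1, h1]

lemma step_exists (m n : ℕ) (lam μ : Fin (m+n) → ℤ) (hlam : IsDominant m n lam)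
    (hμdom : IsDominant m n μ) (hdomle : domLE m n μ lam) (hne : μ ≠ lam) :
    ∃ A B : Fin (m+n), A ≠ B ∧
      IsDominant m n (fun i => μ i + (if i = A then 1 else 0) - (if i = B then 1 else 0)) ∧
      domLT m n μ (fun i => μ i + (if i = A then 1 else 0) - (if i = B then 1 else 0)) ∧
      domLE m n (fun i => μ i + (if i = A then 1 else 0) - (if i = B then 1 else 0)) lam := by
  classical
  -- existence of a strict partial sum gap
  have hPex : ∃ k, psum m n μ k < psum m n lam k := by
    by_contra h
    push_neg at h
    have hpeq : ∀ k, k ≤ m+n → psum m n μ k = psum m n lam k := by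
      intro k hk
      rcases Nat.eq_zero_or_pos k with h0 | h1
      · subst h0; rw [psum_zero, psum_zero]
      rcases eq_or_lt_of_le hk with hN | hN
      · subst hN; exact hdomle.2
      · exact le_antisymm (hdomle.1 k h1 hN) (h k)
    apply hne
    funext i
    have h1 := psum_succ m n μ i i.isLt
    have h2 := psum_succ m n lam i i.isLt
    have e1 := hpeq i (le_of_lt i.isLt)
    have e2 := hpeq (i+1) i.isLt
    have : μ ⟨(i:ℕ), i.isLt⟩ = lam ⟨(i:ℕ), i.isLt⟩ := by linarith
    simpa using this
  set r := Nat.find hPex with hrdef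
  have hr : psum m n μ r < psum m n lam r := Nat.find_spec hPex
  have hrmin : ∀ k, k < r → ¬ psum m n μ k < psum m n lam k := fun k hk => Nat.find_min hPex hk
  have hr1 : 1 ≤ r := by
    by_contra h
    push_neg at h
    interval_cases r
    · rw [psum_zero, psum_zero] at hr; exact lt_irrefl _ hr
  have hrN : r < m + n := by
    by_contra h
    push_neg at h
    rw [psum_of_ge m n μ r h, psum_of_ge m n lam r h, hdomle.2] at hr
    exact lt_irrefl _ hr
  have hlow : ∀ k, k < r → psum m n μ k = psum m n lam k := by
    intro k hk
    rcases Nat.eq_zero_or_pos k with h0 | h1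
    · subst h0; rw [psum_zero, psum_zero]
    · exact le_antisymm (hdomle.1 k h1 (lt_trans hk hrN)) (not_lt.mp (hrmin k hk))
  have hQex : ∃ k, r ≤ k ∧ psum m n μ k = psum m n lam k := ⟨m+n, le_of_lt hrN, hdomle.2⟩
  set s := Nat.find hQex with hsdef
  have hs : r ≤ s ∧ psum m n μ s = psum m n lam s := Nat.find_spec hQex
  have hsN : s ≤ m + n := Nat.find_min' hQex ⟨le_of_lt hrN, hdomle.2⟩
  have hsr : r < s := by
    rcases eq_or_lt_of_le hs.1 with h | h
    · exfalso; rw [← h] at hs; exact absurd hs.2 (ne_of_lt hr)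
    · exact h
  have hmid : ∀ k, r ≤ k → k < s → psum m n μ k + 1 ≤ psum m n lam k := by
    intro k h1 h2
    have hne' : psum m n μ k ≠ psum m n lam k := by
      intro h
      exact Nat.find_min hQex h2 ⟨h1, h⟩
    have hkN : k < m + n := lt_of_lt_of_le h2 hsN
    have := hdomle.1 k (le_trans hr1 h1) hkN
    omega
  -- indices
  have ha : r - 1 < m + n := by omega
  have hb : s - 1 < m + n := by omega
  set A : Fin (m+n) := ⟨r-1, ha⟩ with hAdef
  set B : Fin (m+n) := ⟨s-1, hb⟩ with hBdef
  have hab : r - 1 < s - 1 := by omega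
  have hABne : A ≠ B := by
    intro h; rw [Fin.ext_iff] at h; simp [hAdef, hBdef] at h; omega
  -- element-level facts
  have E1 : ∀ i : Fin (m+n), (i:ℕ) < r - 1 → μ i = lam i := by
    intro i hi
    have h1 := psum_succ m n μ i i.isLt
    have h2 := psum_succ m n lam i i.isLt
    have e1 := hlow i (by omega)
    have e2 := hlow ((i:ℕ)+1) (by omega)
    have : μ ⟨(i:ℕ), i.isLt⟩ = lam ⟨(i:ℕ), i.isLt⟩ := by linarith
    simpa using this
  have E2 : μ A + 1 ≤ lam A := by
    have h1 := psum_succ m n μ (r-1) ha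
    have h2 := psum_succ m n lam (r-1) ha
    have e1 := hlow (r-1) (by omega)
    have e2 := hmid (r-1+1) (by omega) (by omega)
    rw [hAdef]
    linarith
  have E3 : lam B + 1 ≤ μ B := by
    have h1 := psum_succ m n μ (s-1) hb
    have h2 := psum_succ m n lam (s-1) hb
    have e1 := hmid (s-1) (by omega) (by omega)
    have e2 : psum m n μ (s-1+1) = psum m n lam (s-1+1) := by
      have : s - 1 + 1 = s := by omega
      rw [this]; exact hs.2
    rw [hBdef]
    linarith
  have E4 : ∀ hb1 : s < m + n, μ ⟨s, hb1⟩ ≤ lam ⟨s, hb1⟩ := by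
    intro hb1
    have h1 := psum_succ m n μ s hb1
    have h2 := psum_succ m n lam s hb1
    have e1 := hs.2
    have e2 : psum m n μ (s+1) ≤ psum m n lam (s+1) := by
      rcases eq_or_lt_of_le (Nat.succ_le_of_lt hb1) with h | h
      · have h' : s + 1 = m + n := h
        rw [h', hdomle.2]
      · exact hdomle.1 (s+1) (by omega) h
    linarith
  refine ⟨A, B, hABne, ?_, ?_, ?_⟩
  · -- dominance of ν
    have main : ∀ i j : Fin (m+n), (i:ℕ) ≤ (j:ℕ) →
        (∀ p q : Fin (m+n), (i:ℕ) ≤ (p:ℕ) → (p:ℕ) ≤ (q:ℕ) → (q:ℕ) ≤ (j:ℕ) → μ q ≤ μ p) →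
        (∀ p q : Fin (m+n), (i:ℕ) ≤ (p:ℕ) → (p:ℕ) ≤ (q:ℕ) → (q:ℕ) ≤ (j:ℕ) → lam q ≤ lam p) →
        μ j + (if j = A then (1:ℤ) else 0) - (if j = B then 1 else 0)
          ≤ μ i + (if i = A then 1 else 0) - (if i = B then 1 else 0) := by
      intro i j hij hμmono hlmono
      by_cases hjA : j = A
      · by_cases hiA : i = A
        · rw [hiA, hjA]
        · have hij' : (i:ℕ) ≤ r - 1 := by rw [hjA] at hij; exact hij
          have hiA' : (i:ℕ) < r - 1 := by
            rcases eq_or_lt_of_le hij' with h | h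
            · exact absurd (Fin.ext h : i = A) hiA
            · exact h
          have hiB : i ≠ B := by
            intro h; rw [Fin.ext_iff] at h; simp [hBdef] at h; omega
          have hjB : j ≠ B := by rw [hjA]; exact hABne
          have h1 : lam A ≤ lam i := hlmono i A (le_refl _) hij' (by rw [hjA])
          have h2 : μ i = lam i := E1 i hiA'
          simp only [hjA, hiA, hiB, hjB, if_pos, if_neg, hABne, if_true, if_false]
          simp [hABne]
          linarith
      · by_cases hjB : j = B
        · by_cases hiA : i = A
          · have hiB : i ≠ B := by rw [hiA]; exact hABne
            have h : μ B ≤ μ A := by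
              apply hμmono A B (by rw [hiA]) (le_of_lt hab) (by rw [hjB])
            simp [hjB, hjA, hiA, hABne, hABne.symm]
            linarith
          · by_cases hiB : i = B
            · rw [hiB, hjB]
            · have h : μ B ≤ μ i := by
                apply hμmono i B (le_refl _) (by rw [hjB] at hij; exact hij) (by rw [hjB])
              simp [hjB, hjA, hiA, hiB, hABne.symm]
              linarith
        · by_cases hiA : i = A
          · have h : μ j ≤ μ A := by
              apply hμmono A j (by rw [hiA]) (by rw [hiA] at hij; exact hij) (le_refl _)
            simp [hjA, hjB, hiA, hABne]
            linarith
          · by_cases hiB : i = B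
            · have hBj : s - 1 < (j:ℕ) := by
                rw [hiB] at hij
                rcases eq_or_lt_of_le (hij : s - 1 ≤ (j:ℕ)) with h | h
                · exact absurd (Fin.ext h.symm : j = B) hjB
                · exact h
              have hb1 : s < m + n := by have := j.isLt; omega
              set B1 : Fin (m+n) := ⟨s, hb1⟩ with hB1def
              have h1 : μ j ≤ μ B1 := by
                apply hμmono B1 j (by rw [hiB]; show s - 1 ≤ s; omega) (by simp [hB1def] <;> omega) (le_refl _)
              have h2 : lam B1 ≤ lam B := by
                apply hlmono B B1 (by rw [hiB]) (by simp [hB1def, hBdef] <;> omega) (by simp [hB1def] <;> omega)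
              have h3 := E4 hb1
              simp [hiB, hjA, hjB, hABne.symm]
              rw [hB1def] at h1 h2
              linarith
            · simp [hjA, hjB, hiA, hiB]
              exact hμmono i j (le_refl _) hij (le_refl _)
    constructor
    · intro i j hij hjm
      apply main i j hij
      · intro p q h1 h2 h3
        exact hμdom.1 p q h2 (lt_of_le_of_lt h3 hjm)
      · intro p q h1 h2 h3
        exact hlam.1 p q h2 (lt_of_le_of_lt h3 hjm)
    · intro i j him hij
      apply main i j hij
      · intro p q h1 h2 h3
        exact hμdom.2 p q (le_trans him h1) h2
      · intro p q h1 h2 h3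
        exact hlam.2 p q (le_trans him h1) h2
  · -- domLT μ ν
    constructor
    · constructor
      · intro k hk1 hk2
        rw [psum_shift]
        by_cases h2 : (B:ℕ) < k
        · have h1 : (A:ℕ) < k := by simp [hAdef, hBdef] at *; omega
          simp [h1, h2]
        · by_cases h1 : (A:ℕ) < k
          · simp [h1, h2] <;> linarith
          · simp [h1, h2]
      · rw [psum_shift]
        have h1 : (A:ℕ) < m + n := A.isLt
        have h2 : (B:ℕ) < m + n := B.isLt
        simp [h1, h2]
    · intro h
      have := congrFun h A
      simp [hABne] at this
  · -- domLE ν lam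
    constructor
    · intro k hk1 hk2
      rw [psum_shift]
      by_cases h2 : (B:ℕ) < k
      · have h1 : (A:ℕ) < k := by simp [hAdef, hBdef] at *; omega
        simp [h1, h2]
        exact hdomle.1 k hk1 hk2
      · by_cases h1 : (A:ℕ) < k
        · simp [h1, h2]
          have : r ≤ k := by simp [hAdef] at h1; omega
          have hks : k < s := by simp [hBdef] at h2; omega
          linarith [hmid k this hks]
        · simp [h1, h2]
          exact hdomle.1 k hk1 hk2
    · rw [psum_shift]
      have h1 : (A:ℕ) < m + n := A.isLt
      have h2 : (B:ℕ) < m + n := B.isLt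
      simp [h1, h2]
      exact hdomle.2


/-- Every `λ ∈ X(T)^+` has only finitely many predecessors in `X(T)^+`: the set of
`μ ∈ X(T)^+` with `μ < λ` such that no `ν ∈ X(T)^+` satisfies `μ < ν < λ` is finite. -/
theorem finite_predecessors (m n : ℕ) (hm : 1 ≤ m) (hn : 1 ≤ n)
    (lam : Fin (m + n) → ℤ) (hlam : IsDominant m n lam) :
    {μ : Fin (m + n) → ℤ | IsDominant m n μ ∧ domLT m n μ lam ∧
      ¬∃ ν : Fin (m + n) → ℤ, IsDominant m n ν ∧ domLT m n μ ν ∧ domLT m n ν lam}.Finite := by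
  apply Set.Finite.subset (Set.finite_range
    (fun p : Fin (m+n) × Fin (m+n) =>
      fun i => lam i - (if i = p.1 then (1:ℤ) else 0) + (if i = p.2 then 1 else 0)))
  rintro μ ⟨hμdom, ⟨hdomle, hne⟩, hnonu⟩
  obtain ⟨A, B, hABne, hνdom, hμν, hνle⟩ := step_exists m n lam μ hlam hμdom hdomle hne
  have hνlam : (fun i => μ i + (if i = A then (1:ℤ) else 0) - (if i = B then 1 else 0)) = lam := by
    by_contra hne'
    exact hnonu ⟨_, hνdom, hμν, hνle, hne'⟩
  refine ⟨(A, B), ?_⟩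
  funext i
  have h2 : μ i + (if i = A then (1:ℤ) else 0) - (if i = B then 1 else 0) = lam i :=
    congrFun hνlam i
  show lam i - (if i = A then (1:ℤ) else 0) + (if i = B then 1 else 0) = μ i
  linarith
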